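/- arXiv:0903.3805 — 5 statements merged into one kernel-verified Lean document; each statement's English description precedes it below -/
import Mathlib

section
/- The reproducing kernel admits the bordered-determinant representation: for every n ≥ 0, k_n(x,y) = −(1/Δ_n) · det of the (n+2)×(n+2) matrix whose (0,0) entry is 0, whose first row (after the corner) is (1, conj(w_1(y)), …, conj(w_n(y))), whose first column (after the corner) is (1, w_1(x), …, w_n(x))ᵀ, and whose remaining (n+1)×(n+1) block is Π_n = (α_{jk})_{0≤j,k≤n}. -/
open MeasureTheory Matrix

/-- The index equivalence splitting off the 0-th row/column of `Fin (n+2)`. -/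
def borderEquiv (n : ℕ) : Fin (n + 2) ≃ (Fin 1 ⊕ Fin (n + 1)) where
  toFun i := Fin.cases (Sum.inl 0) (fun i' => Sum.inr i') i
  invFun := Sum.elim (fun _ => 0) Fin.succ
  left_inv i := by induction i using Fin.cases <;> simp
  right_inv s := by
    rcases s with i | j
    · simp [Fin.eq_zero i]
    · simp

/-- Corollary 1.3: the reproducing kernel admits the bordered-determinant
representation `k_n(x,y) = -(1/Δ_n) · det M(x,y)`, where `M(x,y)` is the `(n+2) × (n+2)`
matrix with `(0,0)` entry `0`, first row `(0, conj(w_0(y)) = 1, conj(w_1(y)), …, conj(w_n(y)))`,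
first column `(0, w_0(x) = 1, w_1(x), …, w_n(x))ᵀ`, and remaining block
`Π_n = (α_{jk})_{0≤j,k≤n}`, `Δ_n = det Π_n`. -/
theorem kernel_bordered_determinant
    (μ : Measure ℝ) [IsProbabilityMeasure μ]
    (hsupp : ∀ s : Set ℝ, s.Finite → μ sᶜ ≠ 0)
    (w : ℕ → ℝ → ℂ) (hw : ∀ k, MemLp (w k) 2 μ)
    (hw0 : w 0 = fun _ => 1)
    (hli : LinearIndependent ℂ fun k => (hw k).toLp (w k))
    (α : ℕ → ℕ → ℂ)
    (hα : ∀ j k, α j k = ∫ x, w j x * (starRingEnd ℂ) (w k x) ∂μ)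
    (n : ℕ) (G : Matrix (Fin (n + 1)) (Fin (n + 1)) ℂ)
    (hG : ∀ i j : Fin (n + 1), G i j = α i j)
    (p : ℕ → ℝ → ℂ)
    (horth : ∀ j k : ℕ, ∫ x, p j x * (starRingEnd ℂ) (p k x) ∂μ = if j = k then 1 else 0)
    (hpspan : ∀ m : ℕ, m ≤ n → ∃ c : Fin (m + 1) → ℂ, ∀ x, p m x = ∑ i, c i * w i x) :
    ∀ x y : ℝ,
      ∑ k : Fin (n + 1), p k x * (starRingEnd ℂ) (p k y) =
        -(Matrix.det (Matrix.of fun i j : Fin (n + 2) =>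
            Fin.cases
              (Fin.cases (0 : ℂ) (fun j' : Fin (n + 1) => (starRingEnd ℂ) (w j' y)) j)
              (fun i' : Fin (n + 1) =>
                Fin.cases (w i' x) (fun j' : Fin (n + 1) => α i' j') j)
              i)) / G.det := by
  intro x y
  -- integrability of products
  have hwc : ∀ b : ℕ, MemLp (fun t => (starRingEnd ℂ) (w b t)) 2 μ := fun b =>
    (hw b).of_le (continuous_star.comp_aestronglyMeasurable (hw b).aestronglyMeasurable)
      (by filter_upwards with t; simp)
  have hint : ∀ a b : ℕ, Integrable (fun t => w a t * (starRingEnd ℂ) (w b t)) μ := by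
    intro a b
    have h : MemLp ((w a) • fun t => (starRingEnd ℂ) (w b t)) 1 μ :=
      (hwc b).smul (hw a)
    exact memLp_one_iff_integrable.mp h
  -- the coefficient matrix C
  choose c hc using fun k : Fin (n + 1) => hpspan k (Nat.lt_succ_iff.mp k.isLt)
  set C : Matrix (Fin (n + 1)) (Fin (n + 1)) ℂ :=
    Matrix.of fun k i => if h : (i : ℕ) < (k : ℕ) + 1 then c k ⟨i, h⟩ else 0 with hCdef
  have hp : ∀ (k : Fin (n + 1)) (t : ℝ), p k t = ∑ i : Fin (n + 1), C k i * w i t := by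
    intro k t
    rw [hc k t]
    set g : ℕ → ℂ := fun i => if h : i < (k : ℕ) + 1 then c k ⟨i, h⟩ * w i t else 0 with hg
    calc ∑ i : Fin ((k : ℕ) + 1), c k i * w i t
        = ∑ i : Fin ((k : ℕ) + 1), g i := by
          refine Finset.sum_congr rfl fun i _ => ?_
          simp [hg, i.isLt]
          intro h; exact absurd h (by omega)
      _ = ∑ i ∈ Finset.range ((k : ℕ) + 1), g i := Fin.sum_univ_eq_sum_range g _
      _ = ∑ i ∈ Finset.range (n + 1), g i := by
          refine Finset.sum_subset
            (Finset.range_subset_range.mpr (Nat.succ_le_succ (Nat.lt_succ_iff.mp k.isLt))) ?_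
          intro i _ hi
          simp only [Finset.mem_range, not_lt] at hi
          simp [hg, Nat.not_lt.mpr hi]
          intro h; omega
      _ = ∑ i : Fin (n + 1), g i := (Fin.sum_univ_eq_sum_range g _).symm
      _ = ∑ i : Fin (n + 1), C k i * w i t := by
          refine Finset.sum_congr rfl fun i _ => ?_
          by_cases h : (i : ℕ) < (k : ℕ) + 1
          · simp [hg, hCdef, h]
          · simp [hg, hCdef, h]
  -- orthonormality in coordinates
  have key : ∀ j k : Fin (n + 1),
      ∑ a : Fin (n + 1), ∑ b : Fin (n + 1),
        C j a * (starRingEnd ℂ) (C k b) * α a b = if j = k then 1 else 0 := by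
    intro j k
    have h0 := horth j k
    have heq : (∫ t, p j t * (starRingEnd ℂ) (p k t) ∂μ)
        = ∑ a : Fin (n + 1), ∑ b : Fin (n + 1),
            C j a * (starRingEnd ℂ) (C k b) * α a b := by
      have hpt : ∀ t, p j t * (starRingEnd ℂ) (p k t)
          = ∑ a : Fin (n + 1), ∑ b : Fin (n + 1),
              C j a * (starRingEnd ℂ) (C k b) * (w a t * (starRingEnd ℂ) (w b t)) := by
        intro t
        rw [hp j t, hp k t, map_sum, Finset.sum_mul_sum]
        refine Finset.sum_congr rfl fun a _ => Finset.sum_congr rfl fun b _ => ?_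
        rw [_root_.map_mul]
        ring
      have hFint : ∀ a b : Fin (n + 1), Integrable
          (fun t => C j a * (starRingEnd ℂ) (C k b) * (w a t * (starRingEnd ℂ) (w b t))) μ :=
        fun a b => (hint a b).const_mul _
      simp_rw [hpt]
      rw [integral_finset_sum _ (fun (a : Fin (n + 1)) _ =>
        integrable_finset_sum (μ := μ) Finset.univ (fun (b : Fin (n + 1)) _ => hFint a b))]
      refine Finset.sum_congr rfl fun a _ => ?_
      rw [integral_finset_sum _ (fun (b : Fin (n + 1)) _ => hFint a b)]
      refine Finset.sum_congr rfl fun b _ => ?_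
      rw [integral_const_mul, hα]
    rw [heq] at h0
    rw [h0]
    simp [Fin.val_inj]
  -- C * G * Cᴴ = 1
  have hCGC : C * G * Cᴴ = 1 := by
    ext j k
    have hk := key j k
    rw [Finset.sum_comm] at hk
    simp only [Matrix.mul_apply, Matrix.conjTranspose_apply, Matrix.one_apply]
    calc ∑ b, (∑ a, C j a * G a b) * star (C k b)
        = ∑ b, ∑ a, C j a * (starRingEnd ℂ) (C k b) * α a b := by
          refine Finset.sum_congr rfl fun b _ => ?_
          rw [Finset.sum_mul]
          refine Finset.sum_congr rfl fun a _ => ?_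
          rw [hG, ← starRingEnd_apply]
          ring
      _ = if j = k then 1 else 0 := hk
  have hGCC : G * (Cᴴ * C) = 1 := by
    have h1 : C * (G * Cᴴ) = 1 := by rw [← Matrix.mul_assoc]; exact hCGC
    have h2 : (G * Cᴴ) * C = 1 := mul_eq_one_comm.mp h1
    rw [← Matrix.mul_assoc]
    exact h2
  have hdetG : G.det ≠ 0 := by
    intro h
    have h2 := congrArg Matrix.det hGCC
    rw [Matrix.det_mul, h, zero_mul, Matrix.det_one] at h2
    exact zero_ne_one h2
  haveI : Invertible G := invertibleOfRightInverse G _ hGCC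
  have hGinv : G⁻¹ = Cᴴ * C := Matrix.inv_eq_right_inv hGCC
  -- block matrices
  set B : Matrix (Fin 1) (Fin (n + 1)) ℂ :=
    Matrix.of fun _ j => (starRingEnd ℂ) (w j y) with hB
  set Cm : Matrix (Fin (n + 1)) (Fin 1) ℂ := Matrix.of fun i _ => w i x with hCm
  have hM : (Matrix.of fun i j : Fin (n + 2) =>
        Fin.cases
          (Fin.cases (0 : ℂ) (fun j' : Fin (n + 1) => (starRingEnd ℂ) (w j' y)) j)
          (fun i' : Fin (n + 1) =>
            Fin.cases (w i' x) (fun j' : Fin (n + 1) => α i' j') j)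
          i) =
      (Matrix.fromBlocks (0 : Matrix (Fin 1) (Fin 1) ℂ) B Cm G).submatrix
        (borderEquiv n) (borderEquiv n) := by
    ext i j
    simp only [Matrix.submatrix_apply, Matrix.of_apply]
    induction i using Fin.cases with
    | zero =>
      induction j using Fin.cases with
      | zero => simp [borderEquiv]
      | succ j' => simp [borderEquiv, hB]
    | succ i' =>
      induction j using Fin.cases with
      | zero => simp [borderEquiv, hCm]
      | succ j' => simp [borderEquiv, hG]
  have hdet : (Matrix.of fun i j : Fin (n + 2) =>
        Fin.cases
          (Fin.cases (0 : ℂ) (fun j' : Fin (n + 1) => (starRingEnd ℂ) (w j' y)) j)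
          (fun i' : Fin (n + 1) =>
            Fin.cases (w i' x) (fun j' : Fin (n + 1) => α i' j') j)
          i).det = G.det * (-((B * (Cᴴ * C) * Cm) 0 0)) := by
    rw [hM, Matrix.det_submatrix_equiv_self, Matrix.det_fromBlocks₂₂]
    congr 1
    rw [Matrix.det_fin_one, Matrix.invOf_eq_nonsing_inv, hGinv]
    simp [Matrix.sub_apply]
  rw [hdet, mul_neg, neg_neg, mul_div_cancel_left₀ _ hdetG]
  -- final sum identity
  have hL : ∑ k : Fin (n + 1), p k x * (starRingEnd ℂ) (p k y)
      = ∑ k : Fin (n + 1), ∑ i : Fin (n + 1), ∑ j : Fin (n + 1),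
          C k i * (starRingEnd ℂ) (C k j) * (w i x * (starRingEnd ℂ) (w j y)) := by
    refine Finset.sum_congr rfl fun k _ => ?_
    rw [hp k x, hp k y, map_sum, Finset.sum_mul_sum]
    refine Finset.sum_congr rfl fun i _ => Finset.sum_congr rfl fun j _ => ?_
    rw [_root_.map_mul]
    ring
  have hR : (B * (Cᴴ * C) * Cm) 0 0
      = ∑ k : Fin (n + 1), ∑ i : Fin (n + 1), ∑ j : Fin (n + 1),
          C k i * (starRingEnd ℂ) (C k j) * (w i x * (starRingEnd ℂ) (w j y)) := by
    simp only [Matrix.mul_apply, Matrix.conjTranspose_apply, Matrix.of_apply, hB, hCm,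
      Finset.sum_mul, Finset.mul_sum, ← starRingEnd_apply]
    refine Eq.trans (Finset.sum_congr rfl fun i _ => Finset.sum_comm) ?_
    rw [Finset.sum_comm]
    exact Finset.sum_congr rfl fun k _ => Finset.sum_congr rfl fun i _ =>
      Finset.sum_congr rfl fun j _ => by ring
  rw [hL, hR]
end

section
/- Let (β_{jk})_{0≤j,k≤n} = Π_n^{-1} be the inverse Gram matrix, and suppose {u_k}_{k≥0} and {v_k}_{k≥0} are two families of linear functionals on the linear span of {w_n}_{n≥0} (respectively of {conj(w_n)}_{n≥0}) satisfying u_j(w_k) = δ_{jk} and v_j(conj(w_k)) = δ_{jk} for all j,k. Then β_{jk} = Σ_{m=0}^{n} u_k(p_m) · v_j(conj(p_m)) for all 0 ≤ j,k ≤ n, where p_m are the orthonormal functions associated with {w_n}. -/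
open MeasureTheory

/-- Corollary 1.4: Let `(β_{jk}) = Π_n⁻¹` be the inverse Gram matrix of
`w_0, …, w_n`, and let `{u_k}` and `{v_k}` be linear functionals with `u_j(w_k) = δ_{jk}`
and `v_j(conj(w_k)) = δ_{jk}` for all `j, k`.  Then
`β_{jk} = ∑_{m=0}^n u_k(p_m) · v_j(conj(p_m))` for all `0 ≤ j,k ≤ n`, where `p_m` are the
orthonormal functions associated with `{w_n}` (each `p_m` lying in the span of
`w_0, …, w_m`). -/
theorem inverse_gram_entries_via_functionals
    (μ : Measure ℝ) [IsProbabilityMeasure μ]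
    (hsupp : ∀ s : Set ℝ, s.Finite → μ sᶜ ≠ 0)
    (w : ℕ → ℝ → ℂ) (hw : ∀ k, MemLp (w k) 2 μ)
    (hw0 : w 0 = fun _ => 1)
    (hli : LinearIndependent ℂ fun k => (hw k).toLp (w k))
    (α : ℕ → ℕ → ℂ)
    (hα : ∀ j k, α j k = ∫ x, w j x * (starRingEnd ℂ) (w k x) ∂μ)
    (n : ℕ) (G : Matrix (Fin (n + 1)) (Fin (n + 1)) ℂ)
    (hG : ∀ i j : Fin (n + 1), G i j = α i j)
    (p : ℕ → ℝ → ℂ)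
    (horth : ∀ j k : ℕ, ∫ x, p j x * (starRingEnd ℂ) (p k x) ∂μ = if j = k then 1 else 0)
    (hpspan : ∀ m : ℕ, m ≤ n → ∃ c : Fin (m + 1) → ℂ, ∀ x, p m x = ∑ i, c i * w i x)
    (u v : ℕ → (ℝ → ℂ) →ₗ[ℂ] ℂ)
    (hu : ∀ j k : ℕ, u j (w k) = if j = k then 1 else 0)
    (hv : ∀ j k : ℕ, v j (fun x => (starRingEnd ℂ) (w k x)) = if j = k then 1 else 0) :
    ∀ j k : Fin (n + 1),
      G⁻¹ j k = ∑ m : Fin (n + 1),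
        u k (p m) * v j (fun y => (starRingEnd ℂ) (p m y)) := by
  classical
  choose c hc using fun m : Fin (n + 1) => hpspan m (Nat.lt_succ_iff.mp m.isLt)
  set C : Matrix (Fin (n + 1)) (Fin (n + 1)) ℂ := fun m i =>
    if h : (i : ℕ) < (m : ℕ) + 1 then c m ⟨i, h⟩ else 0 with hCdef
  -- p m expressed as a full-length sum
  have hp : ∀ (m : Fin (n + 1)) (x : ℝ), p m x = ∑ i : Fin (n + 1), C m i * w i x := by
    intro m x
    calc p m x
        = ∑ i : Fin ((m : ℕ) + 1),
            (if h : (i : ℕ) < (m : ℕ) + 1 then c m ⟨(i : ℕ), h⟩ else 0) * w i x := by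
          rw [hc m x]
          refine Finset.sum_congr rfl fun i _ => ?_
          rw [dif_pos i.isLt]
      _ = ∑ i ∈ Finset.range ((m : ℕ) + 1),
            (if h : i < (m : ℕ) + 1 then c m ⟨i, h⟩ else 0) * w i x := by
          exact Fin.sum_univ_eq_sum_range
            (fun i => (if h : i < (m : ℕ) + 1 then c m ⟨i, h⟩ else 0) * w i x) ((m : ℕ) + 1)
      _ = ∑ i ∈ Finset.range (n + 1),
            (if h : i < (m : ℕ) + 1 then c m ⟨i, h⟩ else 0) * w i x := by
          refine Finset.sum_subset (Finset.range_subset_range.2 (by omega)) ?_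
          intro i _ hi
          rw [dif_neg (by simpa using hi), zero_mul]
      _ = ∑ i : Fin (n + 1), C m i * w i x := by
          rw [← Fin.sum_univ_eq_sum_range
            (fun i => (if h : i < (m : ℕ) + 1 then c m ⟨i, h⟩ else 0) * w i x) (n + 1)]
  -- the functionals pick out the coefficients
  have huC : ∀ m k : Fin (n + 1), u k (p m) = C m k := by
    intro m k
    have hpf : (p (m : ℕ)) = ∑ i : Fin (n + 1), C m i • w (i : ℕ) := by
      funext x
      rw [hp m x]
      simp [Finset.sum_apply]
    rw [hpf, map_sum]
    simp only [_root_.map_smul, smul_eq_mul, hu]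
    rw [Finset.sum_eq_single k]
    · simp
    · intro i _ hik
      rw [if_neg (by simpa [Fin.val_eq_val] using hik.symm), mul_zero]
    · simp
  have hvC : ∀ m j : Fin (n + 1),
      v j (fun y => (starRingEnd ℂ) (p m y)) = (starRingEnd ℂ) (C m j) := by
    intro m j
    have hpf : (fun y => (starRingEnd ℂ) (p (m : ℕ) y))
        = ∑ i : Fin (n + 1), (starRingEnd ℂ) (C m i) • (fun y => (starRingEnd ℂ) (w (i : ℕ) y)) := by
      funext y
      rw [hp m y]
      simp [Finset.sum_apply, map_sum]
    rw [hpf, map_sum]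
    simp only [_root_.map_smul, smul_eq_mul, hv]
    rw [Finset.sum_eq_single j]
    · simp
    · intro i _ hij
      rw [if_neg (by simpa [Fin.val_eq_val] using hij.symm), mul_zero]
    · simp
  -- integrability of products
  have hint : ∀ j k : ℕ, Integrable (fun x => w j x * (starRingEnd ℂ) (w k x)) μ := by
    intro j k
    have h := L2.integrable_inner (𝕜 := ℂ) ((hw k).toLp (w k)) ((hw j).toLp (w j))
    refine h.congr ?_
    filter_upwards [(hw j).coeFn_toLp, (hw k).coeFn_toLp] with x h1 h2
    simp [RCLike.inner_apply, h1, h2, mul_comm]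
  -- orthonormality in matrix form : C * G * C.conjTranspose = 1
  have key : ∀ a m : Fin (n + 1),
      ∑ j : Fin (n + 1), ∑ k : Fin (n + 1),
        C a j * (starRingEnd ℂ) (C m k) * α j k = if a = m then 1 else 0 := by
    intro a m
    have hexp : ∀ x, p a x * (starRingEnd ℂ) (p m x)
        = ∑ j : Fin (n + 1), ∑ k : Fin (n + 1),
            C a j * (starRingEnd ℂ) (C m k) * (w j x * (starRingEnd ℂ) (w k x)) := by
      intro x
      rw [hp a x, hp m x, map_sum, Finset.sum_mul_sum]
      refine Finset.sum_congr rfl fun j _ => Finset.sum_congr rfl fun k _ => ?_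
      rw [map_mul]
      ring
    have hInt1 : ∀ j k : Fin (n + 1),
        Integrable (fun x => C a j * (starRingEnd ℂ) (C m k)
          * (w j x * (starRingEnd ℂ) (w k x))) μ := fun j k => (hint j k).const_mul _
    have := horth a m
    rw [show (fun x => p (a : ℕ) x * (starRingEnd ℂ) (p (m : ℕ) x))
        = fun x => ∑ j : Fin (n + 1), ∑ k : Fin (n + 1),
            C a j * (starRingEnd ℂ) (C m k) * (w j x * (starRingEnd ℂ) (w k x))
      from funext hexp] at this
    rw [integral_finset_sum _ (fun j _ => integrable_finset_sum _ (fun k _ => hInt1 j k))] at this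
    simp only [integral_finset_sum _ (fun k _ => hInt1 _ k)] at this
    simp only [integral_const_mul] at this
    calc ∑ j : Fin (n + 1), ∑ k : Fin (n + 1), C a j * (starRingEnd ℂ) (C m k) * α j k
        = ∑ j : Fin (n + 1), ∑ k : Fin (n + 1), C a j * (starRingEnd ℂ) (C m k)
            * ∫ x, w j x * (starRingEnd ℂ) (w k x) ∂μ := by
          refine Finset.sum_congr rfl fun j _ => Finset.sum_congr rfl fun k _ => ?_
          rw [hα]
      _ = if ((a : ℕ) = (m : ℕ)) then 1 else 0 := this
      _ = if a = m then 1 else 0 := by simp [Fin.val_eq_val]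
  have hCGC : C * G * C.conjTranspose = 1 := by
    ext a m
    rw [Matrix.mul_apply, Matrix.one_apply]
    calc ∑ k, (C * G) a k * C.conjTranspose k m
        = ∑ k : Fin (n + 1), (∑ j : Fin (n + 1), C a j * G j k) * (starRingEnd ℂ) (C m k) := by
          refine Finset.sum_congr rfl fun k _ => ?_
          rw [Matrix.mul_apply, Matrix.conjTranspose_apply]
          rfl
      _ = ∑ j : Fin (n + 1), ∑ k : Fin (n + 1),
            C a j * (starRingEnd ℂ) (C m k) * α j k := by
          rw [Finset.sum_comm]
          refine Finset.sum_congr rfl fun j _ => ?_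
          rw [Finset.sum_mul]
          refine Finset.sum_congr rfl fun k _ => ?_
          rw [hG]
          ring
      _ = if a = m then 1 else 0 := key a m
  -- deduce G⁻¹ = C.conjTranspose * C
  have h1 : C * (G * C.conjTranspose) = 1 := by rw [← Matrix.mul_assoc]; exact hCGC
  have h2 : (G * C.conjTranspose) * C = 1 := mul_eq_one_comm.mp h1
  have h3 : G * (C.conjTranspose * C) = 1 := by rw [← Matrix.mul_assoc]; exact h2
  have hGinv : G⁻¹ = C.conjTranspose * C := Matrix.inv_eq_right_inv h3
  intro j k
  rw [hGinv, Matrix.mul_apply]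
  refine Finset.sum_congr rfl fun m _ => ?_
  rw [Matrix.conjTranspose_apply, huC m k, hvC m j]
  exact mul_comm _ _
end

section
/- For every n ≥ 0, the (n+1)×(n+1) real matrix with (i,j) entry ((1+(−1)^{i+j})/(2√π)) · Γ((i+j+1)/2), for 0 ≤ i,j ≤ n, has determinant equal to 2^{−n(n+1)/2} · ∏_{k=0}^{n} k!. -/
open Finset Matrix

/-- Normalized even moments of the probabilists' weight. -/
noncomputable def hb : ℕ → ℝ
  | 0 => 1
  | 1 => 0
  | (k+2) => (k+1) * hb k

/-- Coefficients of the monic (probabilists') Hermite polynomials. -/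
noncomputable def hc : ℕ → ℕ → ℝ
  | 0, 0 => 1
  | 0, _+1 => 0
  | 1, p => if p = 1 then 1 else 0
  | (i+2), 0 => -((i:ℝ)+1) * hc i 0
  | (i+2), (p+1) => hc (i+1) p - ((i:ℝ)+1) * hc i (p+1)

lemma hb_succ (k : ℕ) : hb (k+1) = k * hb (k-1) := by
  cases k with
  | zero => simp [hb]
  | succ k => simp [hb]

lemma hc_eq_zero : ∀ i p : ℕ, i < p → hc i p = 0 := by
  intro i
  induction i using Nat.strong_induction_on with
  | _ i ih =>
    match i with
    | 0 =>
      intro p hp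
      match p, hp with
      | (q+1), _ => simp [hc]
    | 1 =>
      intro p hp
      have : p ≠ 1 := by omega
      simp [hc, this]
    | (i+2) =>
      intro p hp
      match p, hp with
      | (q+1), hp =>
        rw [hc, ih (i+1) (by omega) q (by omega), ih i (by omega) (q+1) (by omega)]
        ring

lemma hc_diag : ∀ i, hc i i = 1 := by
  intro i
  induction i using Nat.strong_induction_on with
  | _ i ih =>
    match i with
    | 0 => rfl
    | 1 => simp [hc]
    | (i+2) =>
      rw [hc, ih (i+1) (by omega), hc_eq_zero i (i+1+1) (by omega)]
      ring

/-- derivative relation: `(p+1) * c_{i+1, p+1} = (i+1) * c_{i, p}`. -/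
lemma hc_deriv : ∀ i p : ℕ, ((p:ℝ)+1) * hc (i+1) (p+1) = ((i:ℝ)+1) * hc i p := by
  intro i
  induction i using Nat.strong_induction_on with
  | _ i ih =>
    match i with
    | 0 =>
      intro p
      match p with
      | 0 => norm_num [hc]
      | (q+1) => simp [hc]
    | 1 =>
      intro p
      match p with
      | 0 => norm_num [hc]
      | 1 => norm_num [hc]
      | (q+2) =>
        have hq : q + 2 ≠ 1 := by omega
        simp [hc, hq]
    | (i+2) =>
      intro p
      match p with
      | 0 =>
        have h1 := ih i (by omega) 0
        rw [hc, hc, hc]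
        push_cast at h1 ⊢
        nlinarith [h1]
      | (q+1) =>
        have h1 := ih (i+1) (by omega) q
        have h2 := ih i (by omega) (q+1)
        rw [hc] at h1
        rw [hc, hc]
        push_cast at h1 h2 ⊢
        linear_combination h1 - ((i:ℝ)+2) * h2

/-- The moment functional applied to `He_i * x^m`. -/
noncomputable def hT (i m : ℕ) : ℝ := ∑ p ∈ range (i+1), hc i p * hb (p + m)

lemma hT_zero (m : ℕ) : hT 0 m = hb m := by simp [hT, hc]

lemma hT_ext (i m k : ℕ) (h : i ≤ k) :
    hT i m = ∑ p ∈ range (k+1), hc i p * hb (p + m) := by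
  rw [hT]
  apply Finset.sum_subset
  · intro x hx; simp only [Finset.mem_range] at hx ⊢; omega
  · intro x _ hx
    simp only [Finset.mem_range, not_lt] at hx
    rw [hc_eq_zero i x (by omega), zero_mul]

/-- derivative-sum lemma. -/
lemma hT_deriv_sum (i m : ℕ) :
    ∑ p ∈ range (i+2), (p:ℝ) * hc (i+1) p * hb (p - 1 + m) = ((i:ℝ)+1) * hT i m := by
  rw [Finset.sum_range_succ']
  simp only [Nat.cast_zero, zero_mul, add_zero, Nat.add_sub_cancel]
  rw [hT, Finset.mul_sum]
  refine Finset.sum_congr rfl fun p _ => ?_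
  have h := hc_deriv i p
  push_cast
  linear_combination (hb (p + m)) * h

lemma hT_one (i : ℕ) : hT (i+1) 1 = ((i:ℝ)+1) * hT i 0 := by
  have h := hT_deriv_sum i 0
  simp only [add_zero] at h
  rw [← h, hT]
  refine Finset.sum_congr rfl fun p _ => ?_
  rw [hb_succ p]
  ring

lemma hT_key2 (i m : ℕ) :
    hT (i+1) (m+2) = ((i:ℝ)+1) * hT i (m+1) + ((m:ℝ)+1) * hT (i+1) m := by
  rw [← hT_deriv_sum i (m+1), hT, hT, Finset.mul_sum, ← Finset.sum_add_distrib]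
  refine Finset.sum_congr rfl fun p _ => ?_
  have hb2 : hb (p + (m+2)) = ((p:ℝ) + (m:ℝ) + 1) * hb (p + m) := by
    have h := hb_succ (p + m + 1)
    simp only [Nat.add_sub_cancel] at h
    rw [show p + (m+2) = p + m + 1 + 1 by omega, h]
    push_cast; ring
  rw [hb2]
  cases p with
  | zero => simp; ring
  | succ q =>
    rw [show q + 1 - 1 + (m+1) = q + 1 + m by omega]
    push_cast; ring

/-- c-recurrence in T. -/
lemma hT_rec (i m : ℕ) : hT (i+2) m = hT (i+1) (m+1) - ((i:ℝ)+1) * hT i m := by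
  rw [hT, hT_ext i m (i+2) (by omega), hT,
    Finset.sum_range_succ' (fun p => hc (i+2) p * hb (p + m)) (i+2),
    Finset.sum_range_succ' (fun p => hc i p * hb (p + m)) (i+2)]
  have hsum : ∀ p ∈ range (i+2),
      hc (i+2) (p+1) * hb (p+1+m)
        = hc (i+1) p * hb (p+(m+1)) - ((i:ℝ)+1) * (hc i (p+1) * hb (p+1+m)) := by
    intro p _
    rw [hc, show p + 1 + m = p + (m+1) by omega]
    ring
  rw [Finset.sum_congr rfl hsum, Finset.sum_sub_distrib, hc, ← Finset.mul_sum]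
  ring

lemma hT_succ_zero (i : ℕ) : hT (i+1) 0 = 0 := by
  cases i with
  | zero => simp [hT, hc, hb, Finset.sum_range_succ]
  | succ i =>
    rw [hT_rec, hT_one]
    ring

lemma hT_succ_succ (i m : ℕ) : hT (i+1) (m+1) = ((m:ℝ)+1) * hT i m := by
  cases i with
  | zero =>
    rw [hT_zero]
    have h1 : hT 1 (m+1) = hb (m+2) := by
      simp [hT, hc, Finset.sum_range_succ, show 1 + (m+1) = m+2 by omega]
    rw [h1, hb]
  | succ i =>
    rw [hT_rec, hT_key2]
    ring

lemma hT_lt (i m : ℕ) (h : m < i) : hT i m = 0 := by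
  induction i generalizing m with
  | zero => omega
  | succ i ih =>
    cases m with
    | zero => exact hT_succ_zero i
    | succ m => rw [hT_succ_succ, ih m (by omega), mul_zero]

lemma hT_diag (i : ℕ) : hT i i = Nat.factorial i := by
  induction i with
  | zero => simp [hT_zero, hb]
  | succ i ih => rw [hT_succ_succ, ih, Nat.factorial]; push_cast; ring

/-- Hankel determinant of the probabilists' moments. -/
lemma hankel_det (n : ℕ) :
    Matrix.det (Matrix.of fun i j : Fin (n+1) => hb ((i:ℕ) + (j:ℕ))) =
      ∏ k ∈ range (n+1), (Nat.factorial k : ℝ) := by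
  set M : Matrix (Fin (n+1)) (Fin (n+1)) ℝ := Matrix.of fun i j => hb ((i:ℕ) + (j:ℕ)) with hM
  set C : Matrix (Fin (n+1)) (Fin (n+1)) ℝ := Matrix.of fun i j => hc (i:ℕ) (j:ℕ) with hC
  have hCM : ∀ i q : Fin (n+1), (C * M) i q = hT (i:ℕ) (q:ℕ) := by
    intro i q
    rw [Matrix.mul_apply, hT_ext (i:ℕ) (q:ℕ) n (Nat.lt_succ_iff.mp i.isLt),
      Finset.sum_range (fun p => hc (i:ℕ) p * hb (p + (q:ℕ)))]
    rfl
  have hP : ∀ i j : Fin (n+1), (C * M * Cᵀ) i j = ∑ q : Fin (n+1), hT (i:ℕ) (q:ℕ) * hc (j:ℕ) (q:ℕ) := by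
    intro i j
    rw [Matrix.mul_apply]
    refine Finset.sum_congr rfl fun q _ => ?_
    rw [hCM]
    rfl
  have htri : (C * M * Cᵀ).BlockTriangular id := by
    intro i j hij
    rw [hP]
    apply Finset.sum_eq_zero
    intro q _
    rcases lt_or_ge (q:ℕ) (i:ℕ) with h | h
    · rw [hT_lt _ _ h, zero_mul]
    · rw [hc_eq_zero (j:ℕ) (q:ℕ) (lt_of_lt_of_le hij h), mul_zero]
  have hdiag : ∀ i : Fin (n+1), (C * M * Cᵀ) i i = Nat.factorial (i:ℕ) := by
    intro i
    rw [hP, Finset.sum_eq_single i]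
    · rw [hT_diag, hc_diag, mul_one]
    · intro q _ hq
      rcases lt_or_ge (q:ℕ) (i:ℕ) with h | h
      · rw [hT_lt _ _ h, zero_mul]
      · have h2 : (i:ℕ) < (q:ℕ) :=
          lt_of_le_of_ne h (by simpa [Fin.ext_iff, eq_comm] using hq)
        rw [hc_eq_zero (i:ℕ) (q:ℕ) h2, mul_zero]
    · intro h; exact absurd (Finset.mem_univ i) h
  have hdet1 : (C * M * Cᵀ).det = ∏ k ∈ range (n+1), (Nat.factorial k : ℝ) := by
    rw [Matrix.det_of_upperTriangular htri,
      Finset.prod_range (fun k => (Nat.factorial k : ℝ))]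
    exact Finset.prod_congr rfl fun i _ => hdiag i
  have hCtri : C.BlockTriangular OrderDual.toDual := fun i j hij =>
    hc_eq_zero (i:ℕ) (j:ℕ) hij
  have hdetC : C.det = 1 := by
    rw [Matrix.det_of_lowerTriangular C hCtri]
    exact Finset.prod_eq_one fun i _ => hc_diag (i:ℕ)
  rw [Matrix.det_mul, Matrix.det_mul, hdetC, Matrix.det_transpose, hdetC,
    one_mul, mul_one] at hdet1
  exact hdet1

/-- The normalized Hermite (physicists' weight) moments in terms of `hb`. -/
lemma ha_eq : ∀ m : ℕ, ((1 + (-1 : ℝ) ^ m) / (2 * Real.sqrt Real.pi)) *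
    Real.Gamma (((m:ℝ) + 1) / 2) = hb m / (Real.sqrt 2) ^ m := by
  have hπ : Real.sqrt Real.pi ≠ 0 := by
    positivity
  have h2 : Real.sqrt 2 ≠ 0 := by positivity
  have hsq : Real.sqrt 2 * Real.sqrt 2 = 2 := Real.mul_self_sqrt (by norm_num)
  intro m
  induction m using Nat.strong_induction_on with
  | _ m ih =>
    match m with
    | 0 =>
      simp only [pow_zero, Nat.cast_zero, hb]
      rw [show ((0:ℝ) + 1) / 2 = 1/2 by ring, Real.Gamma_one_half_eq]
      field_simp
      norm_num
    | 1 =>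
      simp only [pow_one, hb]
      norm_num
    | (m+2) =>
      have key := ih m (by omega)
      have harg : (((m:ℕ):ℝ) + 1) / 2 ≠ 0 := by positivity
      have hG : Real.Gamma ((((m+2:ℕ)):ℝ) + 1) / 2 = 0 ∨ True := Or.inr trivial
      have hGam : Real.Gamma ((((m:ℕ)+2:ℝ) + 1) / 2)
          = (((m:ℕ):ℝ) + 1) / 2 * Real.Gamma ((((m:ℕ):ℝ) + 1) / 2) := by
        rw [show (((m:ℕ)+2:ℝ) + 1) / 2 = (((m:ℕ):ℝ) + 1) / 2 + 1 by ring,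
          Real.Gamma_add_one harg]
      have hpow : (-1 : ℝ) ^ (m+2) = (-1 : ℝ) ^ m := by
        rw [pow_succ, pow_succ]; ring
      push_cast at hGam ⊢
      rw [hGam, hpow, hb]
      push_cast
      rw [show Real.sqrt 2 ^ (m+2) = Real.sqrt 2 ^ m * 2 by
        rw [pow_succ, pow_succ, mul_assoc, hsq]]
      linear_combination (((m:ℝ)+1)/2) * key

/-- For every `n ≥ 0`, the `(n+1) × (n+1)` real matrix with `(i,j)` entry
`((1 + (-1)^(i+j)) / (2√π)) * Γ((i+j+1)/2)` has determinant
`2^(-n(n+1)/2) * ∏_{k=0}^n k!`. -/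
theorem hermite_moment_matrix_det (n : ℕ) :
    Matrix.det (Matrix.of fun i j : Fin (n + 1) =>
      ((1 + (-1 : ℝ) ^ ((i : ℕ) + (j : ℕ))) / (2 * Real.sqrt Real.pi)) *
        Real.Gamma (((i : ℕ) + (j : ℕ) + 1 : ℝ) / 2)) =
      (2 : ℝ) ^ (-(n * (n + 1) / 2 : ℕ) : ℤ) *
        ∏ k ∈ Finset.range (n + 1), (Nat.factorial k : ℝ) := by
  have h2 : Real.sqrt 2 ≠ 0 := by positivity
  have hsq : Real.sqrt 2 * Real.sqrt 2 = 2 := Real.mul_self_sqrt (by norm_num)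
  set v : Fin (n+1) → ℝ := fun i => ((Real.sqrt 2) ^ (i:ℕ))⁻¹ with hv
  have hentries : (Matrix.of fun i j : Fin (n + 1) =>
      ((1 + (-1 : ℝ) ^ ((i : ℕ) + (j : ℕ))) / (2 * Real.sqrt Real.pi)) *
        Real.Gamma (((i : ℕ) + (j : ℕ) + 1 : ℝ) / 2)) =
      Matrix.of (fun i j : Fin (n+1) => v i *
        ((Matrix.of fun i j : Fin (n+1) => v j * hb ((i:ℕ) + (j:ℕ))) i j)) := by
    ext i j
    simp only [Matrix.of_apply, hv]
    have := ha_eq ((i:ℕ) + (j:ℕ))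
    push_cast at this ⊢
    rw [this, pow_add, div_eq_mul_inv, mul_inv]
    ring
  rw [hentries, Matrix.det_mul_column v, Matrix.det_mul_row v (fun i j : Fin (n+1) => hb ((i:ℕ) + (j:ℕ))),
    show (fun i j : Fin (n+1) => hb ((i:ℕ) + (j:ℕ)))
      = Matrix.of (fun i j : Fin (n+1) => hb ((i:ℕ) + (j:ℕ))) from rfl,
    hankel_det]
  rw [← mul_assoc, ← Finset.prod_mul_distrib]
  congr 1
  have hterm : ∀ i : Fin (n+1), v i * v i = ((2:ℝ) ^ (i:ℕ))⁻¹ := by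
    intro i
    rw [hv]
    simp only
    rw [← mul_inv, ← mul_pow, hsq]
  calc ∏ i : Fin (n+1), (v i * v i)
      = ∏ i : Fin (n+1), ((2:ℝ) ^ (i:ℕ))⁻¹ := Finset.prod_congr rfl fun i _ => hterm i
    _ = (∏ i : Fin (n+1), (2:ℝ) ^ (i:ℕ))⁻¹ := by rw [← Finset.prod_inv_distrib]
    _ = ((2:ℝ) ^ (∑ i : Fin (n+1), (i:ℕ)))⁻¹ := by rw [Finset.prod_pow_eq_pow_sum]
    _ = (2 : ℝ) ^ (-(n * (n + 1) / 2 : ℕ) : ℤ) := by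
        have hs : (∑ i : Fin (n+1), (i:ℕ)) = n * (n+1) / 2 := by
          rw [← Finset.sum_range (fun k => k)]
          have h := Finset.sum_range_id_mul_two (n+1)
          simp only [Nat.add_sub_cancel] at h
          rw [Nat.mul_comm (n+1) n] at h
          omega
        rw [hs, _root_.zpow_neg, zpow_natCast]
end

section
/- For every n ≥ 0, the (n+1)×(n+1) matrix with (i,j) entry ((1+(−1)^{i+j})/(2√π)) · Γ((i+j+1)/2) is invertible, and its inverse has (i,j) entry β_{ij} = Σ_{k=max(i,j)}^{n} 2^{i+j} · C(k,i) · C(k,j) · H_{k−i}(0) · H_{k−j}(0) / (k! · 2^k), where C(k,i) is the binomial coefficient and H_m(0) denotes the value of the m-th Hermite polynomial at 0, namely H_m(0) = (−1)^{m/2} · m!/(m/2)! if m is even and H_m(0) = 0 if m is odd. -/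
/-- The value of the `m`-th (physicists') Hermite polynomial at `0`:
`H_m(0) = (-1)^(m/2) * m! / (m/2)!` for even `m`, and `0` for odd `m`. -/
noncomputable def hermiteZero (m : ℕ) : ℝ :=
  if Even m then (-1 : ℝ) ^ (m / 2) * (Nat.factorial m : ℝ) / (Nat.factorial (m / 2) : ℝ)
  else 0

noncomputable def mu (m : ℕ) : ℝ :=
  if Even m then (Nat.factorial m : ℝ) / (2 ^ m * (Nat.factorial (m / 2) : ℝ)) else 0

lemma mu_odd {m : ℕ} (h : ¬ Even m) : mu m = 0 := by simp [mu, h]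

lemma mu_rec (m : ℕ) : (m : ℝ) * mu (m - 1) = 2 * mu (m + 1) := by
  rcases Nat.even_or_odd m with he | ho
  · rcases Nat.eq_zero_or_pos m with h | h
    · subst h; simp [mu, Nat.even_iff] at *
    · have h1 : ¬ Even (m - 1) := by simp [Nat.even_sub h, Nat.even_iff, Nat.odd_iff] at he ⊢; omega
      have h2 : ¬ Even (m + 1) := by simp [Nat.even_add_one]; exact he
      simp [mu_odd h1, mu_odd h2]
  · obtain ⟨r, hr⟩ := ho
    subst hr
    have h1 : Even (2 * r + 1 - 1) := by simpa using ⟨r, by omega⟩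
    have h2 : Even (2 * r + 1 + 1) := by refine ⟨r+1, by ring⟩
    have e1 : 2 * r + 1 - 1 = 2 * r := by omega
    have e2 : (2 * r) / 2 = r := by omega
    have e3 : (2 * r + 1 + 1) / 2 = r + 1 := by omega
    rw [mu, mu, if_pos h1, if_pos h2, e1, e2, e3]
    have f1 : (2 * r + 1 + 1).factorial = (2*r+2) * ((2*r+1) * (2*r).factorial) := by
      have : 2 * r + 1 + 1 = (2*r+1) + 1 := by ring
      rw [this, Nat.factorial_succ, Nat.factorial_succ]
    have f2 : (r+1).factorial = (r+1) * r.factorial := Nat.factorial_succ r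
    rw [f1, f2]
    have hrf : (r.factorial : ℝ) ≠ 0 := Nat.cast_ne_zero.mpr (Nat.factorial_ne_zero r)
    have h2r : (2:ℝ)^(2*r) ≠ 0 := by positivity
    push_cast
    field_simp
    ring

noncomputable def Lf : Polynomial ℝ →ₗ[ℝ] ℝ where
  toFun p := p.sum fun m c => c * mu m
  map_add' p q := Polynomial.sum_add_index p q _ (by simp) (by intros; ring)
  map_smul' b p := by
    simp only [RingHom.id_apply, smul_eq_mul]
    rw [Polynomial.sum_smul_index p b _ (by simp), Polynomial.sum, Polynomial.sum,
      Finset.mul_sum]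
    exact Finset.sum_congr rfl (by intros; ring)

lemma Lf_monomial (m : ℕ) (c : ℝ) : Lf (Polynomial.monomial m c) = c * mu m := by
  simp [Lf, Polynomial.sum_monomial_index]

lemma Lf_ibp (p : Polynomial ℝ) : Lf (Polynomial.derivative p) = 2 * Lf (Polynomial.X * p) := by
  induction p using Polynomial.induction_on' with
  | add p q hp hq => rw [map_add, mul_add, map_add, map_add, hp, hq]; ring
  | monomial m c =>
    rw [Polynomial.derivative_monomial, Polynomial.X_mul_monomial, Lf_monomial, Lf_monomial]
    have h := mu_rec m
    calc c * ↑m * mu (m - 1) = c * (↑m * mu (m-1)) := by ring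
    _ = c * (2 * mu (m+1)) := by rw [h]
    _ = 2 * (c * mu (m+1)) := by ring

open Polynomial in
noncomputable def Hp : ℕ → Polynomial ℝ
  | 0 => 1
  | (k+1) => C 2 * X * Hp k - derivative (Hp k)

lemma Hp_succ (k : ℕ) :
    Hp (k+1) = Polynomial.C 2 * Polynomial.X * Hp k - Polynomial.derivative (Hp k) := rfl

lemma Hp_deriv (k : ℕ) : Polynomial.derivative (Hp (k+1)) = Polynomial.C (2*(k+1) : ℝ) * Hp k := by
  induction k with
  | zero => simp [Hp]
  | succ k ih =>
    have h2 : Polynomial.C 2 * Polynomial.X * Hp k - Polynomial.derivative (Hp k) = Hp (k+1) :=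
      (Hp_succ k).symm
    rw [Hp_succ (k+1), map_sub, Polynomial.derivative_mul, Polynomial.derivative_mul, ih,
      Polynomial.derivative_C_mul]
    simp only [Polynomial.derivative_C, Polynomial.derivative_X, map_mul, map_add, map_one,
      map_ofNat, Polynomial.C_eq_natCast] at h2 ⊢
    simp only [Polynomial.derivative_ofNat]
    push_cast
    linear_combination ((k:Polynomial ℝ) + 1) * 2 * h2

lemma Hp_zero : Hp 0 = 1 := rfl

lemma Lf_one : Lf 1 = 1 := by
  have : (1 : Polynomial ℝ) = Polynomial.monomial 0 1 := by simp
  rw [this, Lf_monomial]; simp [mu]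

lemma Lf_Hp (k : ℕ) : Lf (Hp k) = if k = 0 then 1 else 0 := by
  cases k with
  | zero => simpa [Hp_zero] using Lf_one
  | succ k =>
    rw [Hp_succ, map_sub, Lf_ibp]
    have : Polynomial.C (2:ℝ) * Polynomial.X * Hp k = (2:ℝ) • (Polynomial.X * Hp k) := by
      rw [Polynomial.smul_eq_C_mul]; ring
    rw [this, map_smul]
    simp

lemma Lf_orth (m k : ℕ) : Lf (Hp k * Hp m) = if k = m then (2:ℝ)^k * (Nat.factorial k) else 0 := by
  induction m generalizing k with
  | zero => rw [Hp_zero, mul_one, Lf_Hp]; rcases eq_or_ne k 0 with h|h <;> simp [h]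
  | succ m ih =>
    have key : Lf (Hp k * Hp (m+1)) = Lf (Polynomial.derivative (Hp k) * Hp m) := by
      rw [Hp_succ, mul_sub]
      have e1 : Hp k * (Polynomial.C 2 * Polynomial.X * Hp m)
          = (2:ℝ) • (Polynomial.X * (Hp k * Hp m)) := by
        rw [Polynomial.smul_eq_C_mul]; ring
      rw [map_sub, e1, map_smul, smul_eq_mul, ← Lf_ibp, Polynomial.derivative_mul, map_add]
      ring
    rw [key]
    cases k with
    | zero =>
      simp only [Hp_zero, Polynomial.derivative_one, zero_mul, map_zero]
      simp
    | succ j =>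
      rw [Hp_deriv, mul_assoc, ← Polynomial.smul_eq_C_mul, map_smul, smul_eq_mul, ih]
      rcases eq_or_ne j m with h | h
      · subst h
        simp [Nat.factorial_succ]
        push_cast
        ring
      · simp [h, fun hh => h (Nat.succ_injective hh)]


lemma hz_zero : hermiteZero 0 = 1 := by simp [hermiteZero]
lemma hz_one : hermiteZero 1 = 0 := by simp [hermiteZero, Nat.even_iff]

lemma hz_rec (m : ℕ) : hermiteZero (m + 2) = -2 * (m + 1) * hermiteZero m := by
  rcases Nat.even_or_odd m with ⟨s, hs⟩ | ho
  · subst hs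
    have h1 : Even (s + s + 2) := ⟨s+1, by ring⟩
    have h2 : Even (s + s) := ⟨s, rfl⟩
    rw [hermiteZero, hermiteZero, if_pos h1, if_pos h2]
    have e1 : (s + s + 2) / 2 = s + 1 := by omega
    have e2 : (s + s) / 2 = s := by omega
    rw [e1, e2]
    have f1 : (s + s + 2).factorial = (s+s+2) * ((s+s+1) * (s+s).factorial) := by
      rw [show s+s+2 = (s+s+1)+1 from rfl, Nat.factorial_succ, Nat.factorial_succ]
    rw [f1, Nat.factorial_succ]
    have hsf : ((s).factorial : ℝ) ≠ 0 := Nat.cast_ne_zero.mpr (Nat.factorial_ne_zero s)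
    push_cast
    rw [pow_succ]
    field_simp
    ring
  · have h1 : ¬ Even (m+2) := by simp [Nat.even_add] at *; simpa [Nat.odd_iff, Nat.even_iff] using ho
    have h2 : ¬ Even m := Nat.not_even_iff_odd.mpr ho
    simp [hermiteZero, h1, h2]

lemma Hp_coeff (k : ℕ) : ∀ l, (Hp k).coeff l = 2^l * (k.choose l) * hermiteZero (k - l) := by
  induction k with
  | zero =>
    intro l
    rw [Hp_zero]
    cases l with
    | zero => simp [hz_zero]
    | succ s => simp [Polynomial.coeff_one]
  | succ k ih =>
    intro l
    have hco : (Polynomial.C (2:ℝ) * Polynomial.X * Hp k).coeff l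
        = 2 * (Polynomial.X * Hp k).coeff l := by
      rw [mul_assoc, Polynomial.coeff_C_mul]
    rw [Hp_succ, Polynomial.coeff_sub, hco, Polynomial.coeff_derivative, ih]
    cases l with
    | zero =>
      have hx0 : (Polynomial.X * Hp k).coeff 0 = 0 := by simp [Polynomial.mul_coeff_zero]
      rw [hx0]
      cases k with
      | zero => simp [hz_one]
      | succ j =>
        have e0 : j + 1 + 1 - 0 = j + 2 := rfl
        have e1 : j + 1 - (0 + 1) = j := by omega
        rw [e0, e1, hz_rec j]
        norm_num [Nat.choose_one_right, Nat.choose_zero_right]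
    | succ s =>
      rw [Polynomial.coeff_X_mul, ih]
      have hpas : (k+1).choose (s+1) = k.choose s + k.choose (s+1) := rfl
      rcases lt_trichotomy k (s+1) with h | h | h
      · -- s+1 > k
        have c1 : k.choose (s+1) = 0 := Nat.choose_eq_zero_of_lt h
        have c2 : k.choose (s+2) = 0 := Nat.choose_eq_zero_of_lt (by omega)
        rw [hpas, c1, c2]
        push_cast
        ring
      · -- k = s+1
        subst h
        have c2 : (s+1).choose (s+2) = 0 := Nat.choose_eq_zero_of_lt (by omega)
        have e1 : s+1+1 - (s+1) = 1 := by omega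
        have e2 : s+1 - s = 1 := by omega
        rw [hpas, c2, e1, e2, hz_one]
        push_cast
        ring
      · -- s+1 < k : k = s+2+m
        obtain ⟨m, hm⟩ : ∃ m, k = s + 2 + m := ⟨k - (s+2), by omega⟩
        subst hm
        have e1 : s + 2 + m + 1 - (s + 1) = m + 2 := by omega
        have e2 : s + 2 + m - s = m + 2 := by omega
        have e3 : s + 2 + m - (s + 2) = m := by omega
        rw [e1, e2, e3, hpas, hz_rec m]
        have hcs : ((s+2+m).choose (s+2) : ℝ) * (s+2) = ((s+2+m).choose (s+1) : ℝ) * (m+1) := by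
          have := Nat.choose_succ_right_eq (s+2+m) (s+1)
          have h2 : s + 2 + m - (s+1) = m + 1 := by omega
          rw [h2] at this
          exact_mod_cast congrArg (Nat.cast : ℕ → ℝ) this
        push_cast
        push_cast at hcs
        linear_combination (-(2:ℝ)^(s+2)) * hermiteZero m * hcs


lemma Gamma_half (r : ℕ) :
    Real.Gamma (r + 1/2) = (Nat.factorial (2*r) : ℝ) * Real.sqrt Real.pi
      / (4^r * Nat.factorial r) := by
  induction r with
  | zero => simpa using Real.Gamma_one_half_eq
  | succ r ih =>
    have h : (((r+1:ℕ)):ℝ) + 1/2 = ((r:ℝ) + 1/2) + 1 := by push_cast; ring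
    rw [h, Real.Gamma_add_one (by positivity), ih]
    have f1 : (2*(r+1)).factorial = (2*r+2) * ((2*r+1) * (2*r).factorial) := by
      rw [show 2*(r+1) = (2*r+1)+1 by ring, Nat.factorial_succ, Nat.factorial_succ]
    rw [f1, Nat.factorial_succ]
    have h4 : ((4:ℝ)^r) ≠ 0 := by positivity
    have hrf : ((r).factorial : ℝ) ≠ 0 := Nat.cast_ne_zero.mpr (Nat.factorial_ne_zero r)
    push_cast
    rw [pow_succ]
    field_simp
    ring

lemma gamma_mu (m : ℕ) :
    (1 + (-1 : ℝ) ^ m) / (2 * Real.sqrt Real.pi) * Real.Gamma ((m + 1 : ℝ) / 2) = mu m := by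
  rcases Nat.even_or_odd m with ⟨r, hr⟩ | ho
  · subst hr
    have e0 : ((r + r : ℕ) : ℝ) = 2 * r := by push_cast; ring
    have e1 : (((r+r : ℕ) : ℝ) + 1) / 2 = r + 1/2 := by rw [e0]; ring
    have e2 : (-1 : ℝ) ^ (r + r) = 1 := by
      rw [show r + r = 2*r by ring, pow_mul]; norm_num
    rw [e1, e2, Gamma_half r, mu, if_pos ⟨r, rfl⟩]
    have e3 : (r+r)/2 = r := by omega
    have e4 : 2*r = r + r := by ring
    rw [e3, e4]
    have hsp : Real.sqrt Real.pi ≠ 0 := by positivity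
    have hrf : ((r).factorial : ℝ) ≠ 0 := Nat.cast_ne_zero.mpr (Nat.factorial_ne_zero r)
    have h4 : ((4:ℝ)^r) ≠ 0 := by positivity
    have h2 : ((2:ℝ)^(r+r)) = 4^r := by rw [show r+r = 2*r by ring, pow_mul]; norm_num
    rw [h2]
    field_simp
    ring
  · have h1 : (-1:ℝ)^m = -1 := Odd.neg_one_pow ho
    rw [h1, mu, if_neg (Nat.not_even_iff_odd.mpr ho)]
    norm_num


lemma Hp_natDegree (k : ℕ) : (Hp k).natDegree ≤ k := by
  rw [Polynomial.natDegree_le_iff_coeff_eq_zero]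
  intro N hN
  rw [Hp_coeff k N, Nat.choose_eq_zero_of_lt hN]
  simp

lemma Lf_mul_expand (n : ℕ) (p q : Polynomial ℝ) (hp : p.natDegree ≤ n) (hq : q.natDegree ≤ n) :
    Lf (p * q) = ∑ i ∈ Finset.range (n+1), ∑ j ∈ Finset.range (n+1),
      p.coeff i * q.coeff j * mu (i + j) := by
  conv_lhs => rw [Polynomial.as_sum_range' p (n+1) (Nat.lt_succ_of_le hp),
    Polynomial.as_sum_range' q (n+1) (Nat.lt_succ_of_le hq)]
  rw [Finset.sum_mul_sum]
  rw [map_sum]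
  refine Finset.sum_congr rfl fun i _ => ?_
  rw [map_sum]
  refine Finset.sum_congr rfl fun j _ => ?_
  rw [Polynomial.monomial_mul_monomial, Lf_monomial]

section Main
open Matrix
variable (n : ℕ)

noncomputable def Amat (n : ℕ) : Matrix (Fin (n+1)) (Fin (n+1)) ℝ :=
  Matrix.of fun k l : Fin (n+1) => (Hp (k:ℕ)).coeff (l:ℕ)

noncomputable def Mmat (n : ℕ) : Matrix (Fin (n+1)) (Fin (n+1)) ℝ :=
  Matrix.of fun i j : Fin (n+1) => mu ((i:ℕ) + (j:ℕ))

lemma fin_double_sum (f : ℕ → ℕ → ℝ) :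
    ∑ i : Fin (n+1), ∑ j : Fin (n+1), f i j
      = ∑ i ∈ Finset.range (n+1), ∑ j ∈ Finset.range (n+1), f i j := by
  rw [← Fin.sum_univ_eq_sum_range (fun i => ∑ j ∈ Finset.range (n+1), f i j)]
  exact Finset.sum_congr rfl fun i _ => Fin.sum_univ_eq_sum_range (f i) (n+1)

lemma Amat_triangular (k l : Fin (n+1)) (h : (k:ℕ) < (l:ℕ)) : Amat n k l = 0 := by
  rw [Amat, Matrix.of_apply, Hp_coeff, Nat.choose_eq_zero_of_lt h]
  simp

lemma Amat_isUnit : IsUnit (Amat n) := by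
  rw [Matrix.isUnit_iff_isUnit_det]
  have hd : (Amat n).det = ∏ k : Fin (n+1), Amat n k k := by
    apply Matrix.det_of_lowerTriangular
    intro i j hij
    exact Amat_triangular n i j hij
  rw [hd]
  refine isUnit_iff_ne_zero.mpr (Finset.prod_ne_zero_iff.mpr fun k _ => ?_)
  rw [Amat, Matrix.of_apply, Hp_coeff, Nat.sub_self, Nat.choose_self, hz_zero]
  positivity

lemma AMA : Amat n * Mmat n * (Amat n)ᵀ
    = Matrix.diagonal (fun k : Fin (n+1) => (2:ℝ)^(k:ℕ) * ((k:ℕ).factorial : ℝ)) := by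
  ext k m
  simp only [Matrix.mul_apply, Matrix.transpose_apply, Finset.sum_mul]
  rw [Finset.sum_comm]
  have hL : ∑ j : Fin (n+1), ∑ i : Fin (n+1),
      Amat n k j * Mmat n j i * Amat n m i = Lf (Hp (k:ℕ) * Hp (m:ℕ)) := by
    rw [Lf_mul_expand n _ _ (le_trans (Hp_natDegree _) (Nat.lt_succ_iff.mp k.isLt))
      (le_trans (Hp_natDegree _) (Nat.lt_succ_iff.mp m.isLt))]
    rw [← fin_double_sum n (fun i j => (Hp (k:ℕ)).coeff i * (Hp (m:ℕ)).coeff j * mu (i+j))]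
    refine Finset.sum_congr rfl fun j _ => Finset.sum_congr rfl fun i _ => ?_
    rw [Amat, Mmat]
    simp only [Matrix.of_apply]
    ring
  rw [hL, Lf_orth]
  rcases eq_or_ne k m with h | h
  · subst h; simp [Matrix.diagonal_apply_eq]
  · have : (k:ℕ) ≠ (m:ℕ) := fun hh => h (Fin.ext hh)
    rw [if_neg this, Matrix.diagonal_apply_ne _ h]

lemma Bmat_eq :
    (Matrix.of fun i j : Fin (n + 1) =>
        ∑ k ∈ Finset.Icc (max (i : ℕ) (j : ℕ)) n,
          (2 : ℝ) ^ ((i : ℕ) + (j : ℕ)) * (k.choose i : ℝ) * (k.choose j : ℝ) *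
            hermiteZero (k - i) * hermiteZero (k - j) /
              ((Nat.factorial k : ℝ) * 2 ^ k))
      = (Amat n)ᵀ * Matrix.diagonal
          (fun k : Fin (n+1) => (((k:ℕ).factorial : ℝ) * 2^(k:ℕ))⁻¹) * Amat n := by
  ext i j
  have hrhs : ((Amat n)ᵀ * Matrix.diagonal
        (fun k : Fin (n+1) => (((k:ℕ).factorial : ℝ) * 2^(k:ℕ))⁻¹) * Amat n) i j
      = ∑ x : Fin (n+1),
          (Hp (x:ℕ)).coeff (i:ℕ) * ((((x:ℕ)).factorial : ℝ) * 2^(x:ℕ))⁻¹ * (Hp (x:ℕ)).coeff (j:ℕ) := by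
    rw [Matrix.mul_apply]
    refine Finset.sum_congr rfl fun x _ => ?_
    rw [Matrix.mul_diagonal, Matrix.transpose_apply]
    simp [Amat]
  rw [hrhs, Matrix.of_apply]
  rw [Fin.sum_univ_eq_sum_range
    (fun k : ℕ => (Hp k).coeff i * (((k).factorial : ℝ) * 2^k)⁻¹ * (Hp k).coeff j) (n+1)]
  have hcong : ∀ k ∈ Finset.range (n+1),
      (Hp k).coeff i * (((k).factorial : ℝ) * 2^k)⁻¹ * (Hp k).coeff j
      = (2 : ℝ) ^ ((i : ℕ) + (j : ℕ)) * (k.choose i : ℝ) * (k.choose j : ℝ) *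
          hermiteZero (k - i) * hermiteZero (k - j) / ((Nat.factorial k : ℝ) * 2 ^ k) := by
    intro k _
    rw [Hp_coeff, Hp_coeff, pow_add, div_eq_mul_inv]
    ring
  rw [Finset.sum_congr rfl hcong]
  apply Finset.sum_subset
  · intro k hk
    simp only [Finset.mem_Icc] at hk
    exact Finset.mem_range.mpr (by omega)
  · intro k hk hk2
    simp only [Finset.mem_range] at hk
    simp only [Finset.mem_Icc, not_and_or] at hk2
    have : (k:ℕ) < (i:ℕ) ∨ (k:ℕ) < (j:ℕ) := by omega
    rcases this with h | h
    · rw [Nat.choose_eq_zero_of_lt h]; simp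
    · rw [Nat.choose_eq_zero_of_lt h]; simp


lemma Mmat_eq :
    (Matrix.of fun i j : Fin (n + 1) =>
        ((1 + (-1 : ℝ) ^ ((i : ℕ) + (j : ℕ))) / (2 * Real.sqrt Real.pi)) *
          Real.Gamma (((i : ℕ) + (j : ℕ) + 1 : ℝ) / 2)) = Mmat n := by
  ext i j
  rw [Matrix.of_apply, Mmat, Matrix.of_apply]
  have := gamma_mu ((i:ℕ) + (j:ℕ))
  have harg : ((((i:ℕ) + (j:ℕ) : ℕ) : ℝ) + 1) / 2 = ((i : ℕ) + (j : ℕ) + 1 : ℝ) / 2 := by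
    push_cast; ring
  rw [harg] at this
  exact this

theorem hermite_moment_matrix_inv' :
    Mmat n * ((Amat n)ᵀ * Matrix.diagonal
      (fun k : Fin (n+1) => (((k:ℕ).factorial : ℝ) * 2^(k:ℕ))⁻¹) * Amat n) = 1 := by
  set f := fun k : Fin (n+1) => (((k:ℕ).factorial : ℝ) * 2^(k:ℕ))⁻¹ with hf
  set d := fun k : Fin (n+1) => (2:ℝ)^(k:ℕ) * ((k:ℕ).factorial : ℝ) with hdd
  have hd : Matrix.diagonal d * Matrix.diagonal f = 1 := by
    rw [Matrix.diagonal_mul_diagonal]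
    have he : (fun k : Fin (n+1) => d k * f k) = fun _ => (1:ℝ) := by
      funext k
      rw [hf, hdd]
      have h1 : (((k:ℕ).factorial : ℝ)) ≠ 0 := Nat.cast_ne_zero.mpr (Nat.factorial_ne_zero _)
      have h2 : ((2:ℝ)^(k:ℕ)) ≠ 0 := by positivity
      field_simp
    rw [he, Matrix.diagonal_one]
  have h1 : Amat n * (Mmat n * ((Amat n)ᵀ * Matrix.diagonal f * Amat n)) = Amat n * 1 := by
    calc Amat n * (Mmat n * ((Amat n)ᵀ * Matrix.diagonal f * Amat n))
        = (Amat n * Mmat n * (Amat n)ᵀ) * Matrix.diagonal f * Amat n := by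
          simp only [Matrix.mul_assoc]
      _ = Matrix.diagonal d * Matrix.diagonal f * Amat n := by rw [AMA]
      _ = 1 * Amat n := by rw [hd]
      _ = Amat n * 1 := by rw [one_mul, mul_one]
  exact (Amat_isUnit n).mul_left_cancel h1

end Main


/-- For every `n ≥ 0`, the `(n+1) × (n+1)` matrix with `(i,j)` entry
`((1 + (-1)^(i+j)) / (2√π)) * Γ((i+j+1)/2)` is invertible, with inverse entries
`β_{ij} = ∑_{k = max(i,j)}^{n} 2^(i+j) C(k,i) C(k,j) H_{k-i}(0) H_{k-j}(0) / (k! 2^k)`. -/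
theorem hermite_moment_matrix_inv (n : ℕ) :
    (Matrix.of fun i j : Fin (n + 1) =>
        ((1 + (-1 : ℝ) ^ ((i : ℕ) + (j : ℕ))) / (2 * Real.sqrt Real.pi)) *
          Real.Gamma (((i : ℕ) + (j : ℕ) + 1 : ℝ) / 2)) *
      (Matrix.of fun i j : Fin (n + 1) =>
        ∑ k ∈ Finset.Icc (max (i : ℕ) (j : ℕ)) n,
          (2 : ℝ) ^ ((i : ℕ) + (j : ℕ)) * (k.choose i : ℝ) * (k.choose j : ℝ) *
            hermiteZero (k - i) * hermiteZero (k - j) /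
              ((Nat.factorial k : ℝ) * 2 ^ k)) = 1 ∧
    (Matrix.of fun i j : Fin (n + 1) =>
        ∑ k ∈ Finset.Icc (max (i : ℕ) (j : ℕ)) n,
          (2 : ℝ) ^ ((i : ℕ) + (j : ℕ)) * (k.choose i : ℝ) * (k.choose j : ℝ) *
            hermiteZero (k - i) * hermiteZero (k - j) /
              ((Nat.factorial k : ℝ) * 2 ^ k)) *
      (Matrix.of fun i j : Fin (n + 1) =>
        ((1 + (-1 : ℝ) ^ ((i : ℕ) + (j : ℕ))) / (2 * Real.sqrt Real.pi)) *
          Real.Gamma (((i : ℕ) + (j : ℕ) + 1 : ℝ) / 2)) = 1 := by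
  have key := hermite_moment_matrix_inv' n
  rw [← Mmat_eq, ← Bmat_eq n] at key
  exact ⟨key, mul_eq_one_comm.mp key⟩
end

section
/- Let α > −1. For every n ≥ 0, the (n+1)×(n+1) matrix with (i,j) entry (α+1)_{i+j}, for 0 ≤ i,j ≤ n, is invertible and its inverse has (i,j) entry β_{ij} = [(−1)^{i+j} / ((α+1)_i · (α+1)_j)] · Σ_{k=max(i,j)}^{n} ((α+1)_k / k!) · C(k,i) · C(k,j), where C(k,i) is the binomial coefficient. -/
open Finset Polynomial

noncomputable def poch (x : ℝ) (m : ℕ) : ℝ := Polynomial.eval x (ascPochhammer ℝ m)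

lemma poch_zero (x : ℝ) : poch x 0 = 1 := by simp [poch]

lemma poch_succ_right (x : ℝ) (m : ℕ) : poch x (m + 1) = poch x m * (x + m) := by
  simp [poch, ascPochhammer_succ_right]

lemma poch_succ_left (x : ℝ) (m : ℕ) : poch x (m + 1) = x * poch (x + 1) m := by
  simp [poch, ascPochhammer_succ_left, eval_comp]

lemma poch_add (x : ℝ) (m k : ℕ) : poch x (m + k) = poch x m * poch (x + m) k := by
  rw [poch, ← ascPochhammer_mul]
  simp [poch, eval_comp]

lemma poch_diff (y : ℝ) (m : ℕ) :
    poch y (m + 1) - poch (y + 1) (m + 1) = -((m : ℝ) + 1) * poch (y + 1) m := by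
  rw [poch_succ_left, poch_succ_right]; ring

lemma altsum_step (k l : ℕ) (x : ℝ) :
    ∑ j ∈ range (k + 2), (-1 : ℝ) ^ j * ((k + 1).choose j) * poch (x + j) l
      = (∑ j ∈ range (k + 1), (-1 : ℝ) ^ j * (k.choose j) * poch (x + j) l)
        - ∑ j ∈ range (k + 1), (-1 : ℝ) ^ j * (k.choose j) * poch ((x + 1) + j) l := by
  have hL : ∑ j ∈ range (k + 2), (-1 : ℝ) ^ j * ((k + 1).choose j) * poch (x + j) l
      = (∑ j ∈ range (k + 1),
          (-((-1 : ℝ) ^ j * (k.choose j) * poch ((x + 1) + j) l)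
            + -((-1 : ℝ) ^ j * (k.choose (j + 1)) * poch (x + (j + 1 : ℕ)) l)))
        + poch x l := by
    rw [Finset.sum_range_succ' _ (k + 1)]
    congr 1
    · apply Finset.sum_congr rfl
      intro j hj
      have h1 : x + ((j : ℝ) + 1) = (x + 1) + j := by ring
      rw [Nat.choose_succ_succ]
      push_cast
      rw [h1]
      ring
    · simp
  have hA : ∑ j ∈ range (k + 1), (-1 : ℝ) ^ j * (k.choose j) * poch (x + j) l
      = (∑ j ∈ range (k + 1), -((-1 : ℝ) ^ j * (k.choose (j + 1)) * poch (x + (j + 1 : ℕ)) l))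
        + poch x l := by
    rw [Finset.sum_range_succ' _ k]
    rw [Finset.sum_range_succ (fun j => -((-1 : ℝ) ^ j * (k.choose (j + 1)) * poch (x + (j + 1 : ℕ)) l))]
    simp only [Nat.choose_succ_self, Nat.cast_zero, mul_zero, zero_mul, neg_zero, add_zero]
    congr 1
    · apply Finset.sum_congr rfl
      intro j hj
      push_cast
      ring
    · simp
  rw [hL, hA, Finset.sum_add_distrib, Finset.sum_neg_distrib]
  ring

lemma altsum (l k : ℕ) (x : ℝ) :
    ∑ j ∈ range (k + 1), (-1 : ℝ) ^ j * (k.choose j) * poch (x + j) l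
      = (-1 : ℝ) ^ k * (l.descFactorial k) * poch (x + k) (l - k) := by
  induction k generalizing x with
  | zero => simp
  | succ k ih =>
    rw [show k + 1 + 1 = k + 2 from rfl, altsum_step, ih x, ih (x + 1)]
    rcases le_or_gt l k with h | h
    · have h0 : l - k = 0 := Nat.sub_eq_zero_of_le h
      have h1 : l - (k + 1) = 0 := by omega
      have h2 : l.descFactorial (k + 1) = 0 :=
        Nat.descFactorial_eq_zero_iff_lt.mpr (by omega)
      simp [h0, h1, h2, poch_zero]
    · have hm : l - k = (l - (k + 1)) + 1 := by omega
      have harg : (x + 1) + (k : ℝ) = (x + k) + 1 := by ring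
      rw [hm, harg]
      have hdiff := poch_diff (x + k) (l - (k + 1))
      have hd : (l.descFactorial (k + 1) : ℝ)
          = ((l - k : ℕ) : ℝ) * (l.descFactorial k : ℝ) := by
        rw [Nat.descFactorial_succ]; push_cast; ring
      have hc : ((l - k : ℕ) : ℝ) = ((l - (k + 1) : ℕ) : ℝ) + 1 := by
        rw [hm]; push_cast; ring
      have harg2 : x + ((k : ℝ) + 1) = (x + k) + 1 := by ring
      push_cast
      rw [harg2, hd, hc]
      linear_combination ((-1 : ℝ) ^ k * (l.descFactorial k : ℝ)) * hdiff

lemma altchoose (i l N : ℕ) (hl : l ≤ N) :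
    ∑ k ∈ range (N + 1), (-1 : ℝ) ^ k * (l.choose k) * (k.choose i)
      = if l = i then (-1 : ℝ) ^ i else 0 := by
  have h1 : ∑ k ∈ range (N + 1), (-1 : ℝ) ^ k * (l.choose k) * (k.choose i)
      = ∑ k ∈ range (l + 1), (-1 : ℝ) ^ k * (l.choose k) * (k.choose i) := by
    refine (Finset.sum_subset (Finset.range_subset_range.mpr (by omega)) ?_).symm
    intro k hk hk'
    simp only [Finset.mem_range] at hk hk'
    have : l < k := by omega
    simp [Nat.choose_eq_zero_of_lt this]
  rw [h1]
  by_cases hi : i ≤ l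
  · rw [← Finset.sum_range_add_sum_Ico _ (show i ≤ l + 1 by omega)]
    have hz : ∑ k ∈ range i, (-1 : ℝ) ^ k * (l.choose k) * (k.choose i) = 0 := by
      apply Finset.sum_eq_zero
      intro k hk
      simp only [Finset.mem_range] at hk
      simp [Nat.choose_eq_zero_of_lt hk]
    rw [hz, zero_add, Finset.sum_Ico_eq_sum_range]
    have hrange : l + 1 - i = (l - i) + 1 := by omega
    rw [hrange]
    have hterm : ∀ j ∈ range ((l - i) + 1),
        (-1 : ℝ) ^ (i + j) * (l.choose (i + j)) * ((i + j).choose i)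
          = ((-1 : ℝ) ^ i * (l.choose i)) * ((-1 : ℝ) ^ j * ((l - i).choose j)) := by
      intro j hj
      simp only [Finset.mem_range] at hj
      have hkn : i + j ≤ l := by omega
      have := Nat.choose_mul (n := l) (Nat.le_add_right i j)
      rw [Nat.add_sub_cancel_left] at this
      have hcast : (l.choose (i + j) : ℝ) * ((i + j).choose i : ℝ)
          = (l.choose i : ℝ) * ((l - i).choose j : ℝ) := by exact_mod_cast congrArg Nat.cast this
      rw [pow_add]
      linear_combination ((-1 : ℝ) ^ i * (-1 : ℝ) ^ j) * hcast
    rw [Finset.sum_congr rfl hterm, ← Finset.mul_sum]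
    have halt : ∑ j ∈ range ((l - i) + 1), (-1 : ℝ) ^ j * ((l - i).choose j)
        = if l - i = 0 then 1 else 0 := by
      have := @Int.alternating_sum_range_choose (l - i)
      exact_mod_cast congrArg Int.cast this
    rw [halt]
    by_cases he : l = i
    · subst he; simp
    · have : l - i ≠ 0 := by omega
      simp [this, he]
  · have hz : ∑ k ∈ range (l + 1), (-1 : ℝ) ^ k * (l.choose k) * (k.choose i) = 0 := by
      apply Finset.sum_eq_zero
      intro k hk
      simp only [Finset.mem_range] at hk
      have : k < i := by omega
      simp [Nat.choose_eq_zero_of_lt this]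
    rw [hz]
    have : l ≠ i := by omega
    simp [this]

lemma entry (a : ℝ) (ha : 0 < a) (n i l : ℕ) (hi : i ≤ n) (hl : l ≤ n) :
    ∑ j ∈ range (n + 1),
      ((-1 : ℝ) ^ (i + j) / (poch a i * poch a j) *
        ∑ k ∈ Finset.Icc (max i j) n,
          poch a k / (Nat.factorial k : ℝ) * (k.choose i : ℝ) * (k.choose j : ℝ)) * poch a (j + l)
      = if i = l then 1 else 0 := by
  have hpos : ∀ m : ℕ, 0 < poch a m := fun m => ascPochhammer_pos m a ha
  have hne : ∀ m : ℕ, poch a m ≠ 0 := fun m => (hpos m).ne'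
  have hIcc : ∀ j ≤ n,
      (∑ k ∈ Finset.Icc (max i j) n,
        poch a k / (Nat.factorial k : ℝ) * (k.choose i : ℝ) * (k.choose j : ℝ))
      = ∑ k ∈ range (n + 1),
        poch a k / (Nat.factorial k : ℝ) * (k.choose i : ℝ) * (k.choose j : ℝ) := by
    intro j hj
    apply Finset.sum_subset
    · intro k hk
      simp only [Finset.mem_Icc] at hk
      simp only [Finset.mem_range]; omega
    · intro k hk hk'
      simp only [Finset.mem_range] at hk
      simp only [Finset.mem_Icc, not_and, not_le] at hk'
      have : k < i ∨ k < j := by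
        rcases Nat.lt_or_ge k (max i j) with h | h
        · omega
        · exact absurd (hk' h) (by omega)
      rcases this with h | h <;> simp [Nat.choose_eq_zero_of_lt h]
  have step1 : ∑ j ∈ range (n + 1),
      ((-1 : ℝ) ^ (i + j) / (poch a i * poch a j) *
        ∑ k ∈ Finset.Icc (max i j) n,
          poch a k / (Nat.factorial k : ℝ) * (k.choose i : ℝ) * (k.choose j : ℝ)) * poch a (j + l)
      = ∑ j ∈ range (n + 1), ∑ k ∈ range (n + 1),
          ((-1 : ℝ) ^ i / poch a i * (poch a k / (Nat.factorial k : ℝ) * (k.choose i : ℝ)))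
            * ((-1 : ℝ) ^ j * (k.choose j : ℝ) * poch (a + j) l) := by
    apply Finset.sum_congr rfl
    intro j hj
    simp only [Finset.mem_range] at hj
    rw [hIcc j (by omega), poch_add a j l, Finset.mul_sum, Finset.sum_mul]
    apply Finset.sum_congr rfl
    intro k hk
    rw [pow_add]
    field_simp [hne i, hne j]
  rw [step1, Finset.sum_comm]
  have step2 : ∀ k ∈ range (n + 1),
      ∑ j ∈ range (n + 1),
          ((-1 : ℝ) ^ i / poch a i * (poch a k / (Nat.factorial k : ℝ) * (k.choose i : ℝ)))
            * ((-1 : ℝ) ^ j * (k.choose j : ℝ) * poch (a + j) l)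
      = ((-1 : ℝ) ^ i * poch a l / poch a i) * ((-1 : ℝ) ^ k * (l.choose k : ℝ) * (k.choose i : ℝ)) := by
    intro k hk
    simp only [Finset.mem_range] at hk
    rw [← Finset.mul_sum]
    have hshrink : ∑ j ∈ range (n + 1), (-1 : ℝ) ^ j * (k.choose j : ℝ) * poch (a + j) l
        = ∑ j ∈ range (k + 1), (-1 : ℝ) ^ j * (k.choose j : ℝ) * poch (a + j) l := by
      refine (Finset.sum_subset (Finset.range_subset_range.mpr (by omega)) ?_).symm
      intro j hj hj'
      simp only [Finset.mem_range] at hj hj'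
      have : k < j := by omega
      simp [Nat.choose_eq_zero_of_lt this]
    rw [hshrink, altsum]
    rcases le_or_gt k l with h | h
    · have hfac : poch a k * poch (a + k) (l - k) = poch a l := by
        rw [← poch_add]; congr 1; omega
      have hd : (l.descFactorial k : ℝ) = (Nat.factorial k : ℝ) * (l.choose k : ℝ) := by
        exact_mod_cast congrArg Nat.cast (Nat.descFactorial_eq_factorial_mul_choose l k)
      have hfk : (Nat.factorial k : ℝ) ≠ 0 := by positivity
      rw [hd, ← hfac]
      field_simp [hne i, hfk]
    · have h1 : l.choose k = 0 := Nat.choose_eq_zero_of_lt h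
      have h2 : l.descFactorial k = 0 := Nat.descFactorial_eq_zero_iff_lt.mpr h
      simp [h1, h2]
  rw [Finset.sum_congr rfl step2, ← Finset.mul_sum, altchoose i l n hl]
  by_cases he : i = l
  · subst he
    simp only [eq_self_iff_true, if_true]
    have h2 : ((-1 : ℝ) ^ i * poch a i / poch a i) * (-1 : ℝ) ^ i
        = ((-1 : ℝ) ^ i * (-1 : ℝ) ^ i) * (poch a i / poch a i) := by ring
    rw [h2, div_self (hne i), ← pow_add, ← two_mul, pow_mul]
    norm_num
  · have : l ≠ i := fun h => he h.symm
    simp [this, he]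

/-- For `α > -1` and every `n ≥ 0`, the `(n+1) × (n+1)` matrix with `(i,j)` entry
`(α+1)_{i+j}` is invertible, with inverse entries
`β_{ij} = ((-1)^(i+j) / ((α+1)_i (α+1)_j)) ∑_{k=max(i,j)}^n ((α+1)_k / k!) C(k,i) C(k,j)`. -/
theorem laguerre_moment_matrix_inv (α : ℝ) (hα : -1 < α) (n : ℕ) :
    (Matrix.of fun i j : Fin (n + 1) => poch (α + 1) ((i : ℕ) + (j : ℕ))) *
      (Matrix.of fun i j : Fin (n + 1) =>
        (-1 : ℝ) ^ ((i : ℕ) + (j : ℕ)) / (poch (α + 1) i * poch (α + 1) j) *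
          ∑ k ∈ Finset.Icc (max (i : ℕ) (j : ℕ)) n,
            poch (α + 1) k / (Nat.factorial k : ℝ) * (k.choose i : ℝ) * (k.choose j : ℝ)) = 1 ∧
    (Matrix.of fun i j : Fin (n + 1) =>
        (-1 : ℝ) ^ ((i : ℕ) + (j : ℕ)) / (poch (α + 1) i * poch (α + 1) j) *
          ∑ k ∈ Finset.Icc (max (i : ℕ) (j : ℕ)) n,
            poch (α + 1) k / (Nat.factorial k : ℝ) * (k.choose i : ℝ) * (k.choose j : ℝ)) *
      (Matrix.of fun i j : Fin (n + 1) => poch (α + 1) ((i : ℕ) + (j : ℕ))) = 1 := by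
  have ha : 0 < α + 1 := by linarith
  suffices h : (Matrix.of fun i j : Fin (n + 1) =>
        (-1 : ℝ) ^ ((i : ℕ) + (j : ℕ)) / (poch (α + 1) i * poch (α + 1) j) *
          ∑ k ∈ Finset.Icc (max (i : ℕ) (j : ℕ)) n,
            poch (α + 1) k / (Nat.factorial k : ℝ) * (k.choose i : ℝ) * (k.choose j : ℝ)) *
      (Matrix.of fun i j : Fin (n + 1) => poch (α + 1) ((i : ℕ) + (j : ℕ))) = 1 by
    exact ⟨mul_eq_one_comm.mpr h, h⟩
  ext i l
  rw [Matrix.mul_apply, Matrix.one_apply]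
  simp only [Matrix.of_apply]
  have := entry (α + 1) ha n i l i.is_le l.is_le
  rw [Fin.sum_univ_eq_sum_range (fun j =>
    ((-1 : ℝ) ^ ((i : ℕ) + j) / (poch (α + 1) i * poch (α + 1) j) *
      ∑ k ∈ Finset.Icc (max (i : ℕ) j) n,
        poch (α + 1) k / (Nat.factorial k : ℝ) * (k.choose i : ℝ) * (k.choose j : ℝ))
      * poch (α + 1) (j + (l : ℕ))) (n + 1)]
  rw [this]
  simp [Fin.ext_iff]
end
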